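/- Let E be a CPTP map on the d×d complex matrices with Kraus operators {M_k}, and let ρ be a positive semidefinite matrix with E(ρ) = ρ. Then every Kraus operator leaves the support of ρ invariant: for every k and every vector v in the range of ρ, the vector M_k v also lies in the range of ρ. -/

import Mathlib

open Matrix
open scoped ComplexOrder

/-- Factorization: if `ker f ≤ ker h` then `h = g ∘ f` for some `g`. -/
lemma exists_comp_of_ker_le {K V W U : Type*} [Field K] [AddCommGroup V] [Module K V]
    [AddCommGroup W] [Module K W] [AddCommGroup U] [Module K U]
    (f : V →ₗ[K] W) (h : V →ₗ[K] U) (hle : LinearMap.ker f ≤ LinearMap.ker h) :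
    ∃ g : W →ₗ[K] U, h = g ∘ₗ f := by
  let g₀ : LinearMap.range f →ₗ[K] U :=
    (Submodule.liftQ (LinearMap.ker f) h hle) ∘ₗ (f.quotKerEquivRange.symm : _ →ₗ[K] _)
  obtain ⟨g, hg⟩ := LinearMap.exists_extend g₀
  refine ⟨g, ?_⟩
  ext x
  have h2 := DFunLike.congr_fun hg (⟨f x, LinearMap.mem_range_self f x⟩ : LinearMap.range f)
  simp only [LinearMap.comp_apply, Submodule.coe_subtype] at h2
  have h3 := LinearMap.quotKerEquivRange_symm_apply_image f x (LinearMap.mem_range_self f x)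
  simp only [LinearMap.comp_apply]
  rw [h2]
  simp only [g₀, LinearMap.comp_apply, LinearEquiv.coe_coe, h3, Submodule.mkQ_apply,
    Submodule.liftQ_apply]

/-- For any square complex matrix `B`, `range (B * Bᴴ) = range B`. -/
lemma range_mul_conjTranspose_self {d : ℕ} (B : Matrix (Fin d) (Fin d) ℂ) :
    LinearMap.range (B * Bᴴ).mulVecLin = LinearMap.range B.mulVecLin := by
  apply Submodule.eq_of_le_of_finrank_eq
  · rw [Matrix.mulVecLin_mul]
    exact LinearMap.range_comp_le_range _ _
  · have := B.rank_self_mul_conjTranspose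
    simpa [Matrix.rank] using this

/-- If `ρ` is a positive semidefinite fixed point of a CPTP map with Kraus operators
`M k`, then every Kraus operator leaves the support (range) of `ρ` invariant. -/
theorem kraus_ops_preserve_support {d m : ℕ}
    (E : Matrix (Fin d) (Fin d) ℂ → Matrix (Fin d) (Fin d) ℂ)
    (M : Fin m → Matrix (Fin d) (Fin d) ℂ)
    (hKraus : ∀ X, E X = ∑ k, M k * X * (M k)ᴴ)
    (hTP : ∑ k, (M k)ᴴ * M k = 1)
    (ρ : Matrix (Fin d) (Fin d) ℂ) (hρ : ρ.PosSemidef) (hfix : E ρ = ρ) :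
    ∀ k, ∀ v ∈ LinearMap.range ρ.mulVecLin,
      (M k).mulVec v ∈ LinearMap.range ρ.mulVecLin := by
  intro k v hv
  obtain ⟨w, rfl⟩ := hv
  -- decomposition of ρ as a sum of PSD matrices
  have hsum : ∑ j, M j * ρ * (M j)ᴴ = ρ := by rw [← hKraus]; exact hfix
  have hA : ∀ j, (M j * ρ * (M j)ᴴ).PosSemidef := fun j =>
    hρ.mul_mul_conjTranspose_same (M j)
  -- kernel containment : ker ρ ≤ ker (M k * ρ * (M k)ᴴ)
  have hker : LinearMap.ker ρ.mulVecLin ≤ LinearMap.ker (M k * ρ * (M k)ᴴ).mulVecLin := by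
    intro x hx
    have hx0 : ρ.mulVec x = 0 := hx
    have hzero : ∑ j, star x ⬝ᵥ (M j * ρ * (M j)ᴴ) *ᵥ x = 0 := by
      have hmap := map_sum (AddMonoidHom.mk'
        (fun A : Matrix (Fin d) (Fin d) ℂ => star x ⬝ᵥ A *ᵥ x)
        (fun A B => by simp [Matrix.add_mulVec, dotProduct_add]))
        (fun j => M j * ρ * (M j)ᴴ) Finset.univ
      simp only [AddMonoidHom.mk'_apply] at hmap
      rw [← hmap, hsum, hx0, dotProduct_zero]
    have heach : star x ⬝ᵥ (M k * ρ * (M k)ᴴ) *ᵥ x = 0 :=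
      (Finset.sum_eq_zero_iff_of_nonneg
        (fun j _ => (hA j).dotProduct_mulVec_nonneg x)).mp hzero k (Finset.mem_univ k)
    exact (hA k).dotProduct_mulVec_zero_iff x |>.mp heach
  -- factor M k * ρ * (M k)ᴴ = ρ * Gᴴ for some G
  obtain ⟨g, hg⟩ := exists_comp_of_ker_le ρ.mulVecLin (M k * ρ * (M k)ᴴ).mulVecLin hker
  set G := LinearMap.toMatrix' g with hGdef
  have hGg : G.mulVecLin = g := by
    rw [← Matrix.toLin'_apply' G, hGdef, Matrix.toLin'_toMatrix']
  have hfact : M k * ρ * (M k)ᴴ = G * ρ := by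
    have heq : (M k * ρ * (M k)ᴴ).mulVecLin = (G * ρ).mulVecLin := by
      conv_rhs => rw [Matrix.mulVecLin_mul]
      rw [hGg]; exact hg
    have heq' : Matrix.toLin' (M k * ρ * (M k)ᴴ) = Matrix.toLin' (G * ρ) := by
      rw [Matrix.toLin'_apply', Matrix.toLin'_apply']; exact heq
    exact Matrix.toLin'.injective heq'
  have hfact' : M k * ρ * (M k)ᴴ = ρ * Gᴴ := by
    have h1 : (M k * ρ * (M k)ᴴ)ᴴ = M k * ρ * (M k)ᴴ := (hA k).1
    calc M k * ρ * (M k)ᴴ = (M k * ρ * (M k)ᴴ)ᴴ := h1.symm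
      _ = (G * ρ)ᴴ := by rw [hfact]
      _ = ρᴴ * Gᴴ := by rw [Matrix.conjTranspose_mul]
      _ = ρ * Gᴴ := by rw [hρ.1]
  -- square root of ρ
  open scoped MatrixOrder in
  set S := CFC.sqrt ρ with hSdef
  open scoped MatrixOrder in
  have hSS : S * S = ρ := CFC.sqrt_mul_sqrt_self ρ hρ.nonneg
  open scoped MatrixOrder in
  have hSH : Sᴴ = S := (CFC.sqrt_nonneg ρ).posSemidef.1
  -- M k ρ w = (M k * S) (S w) ∈ range (M k * S) = range (M k ρ M kᴴ) ≤ range ρ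
  have hmem : (M k).mulVec (ρ.mulVecLin w) ∈ LinearMap.range (M k * S).mulVecLin := by
    refine ⟨S.mulVec w, ?_⟩
    simp only [Matrix.mulVecLin_apply, Matrix.mulVec_mulVec, mul_assoc, hSS]
  have hrange : LinearMap.range (M k * S).mulVecLin
      = LinearMap.range (M k * ρ * (M k)ᴴ).mulVecLin := by
    rw [← range_mul_conjTranspose_self (M k * S)]
    congr 2
    rw [Matrix.conjTranspose_mul, hSH, ← hSS]
    simp only [Matrix.mul_assoc]
  rw [hrange, hfact'] at hmem
  obtain ⟨u, hu⟩ := hmem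
  exact ⟨Gᴴ.mulVec u, by
    simp only [Matrix.mulVecLin_apply, Matrix.mulVec_mulVec] at hu ⊢
    exact hu⟩
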